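/- Let d > 0, λ₁ > 0, and let v ∈ C²(ℝ²×[−d,0];ℝ³) be λ₁-periodic in x₁ (v(x₁+λ₁,x₂,x₃) = v(x₁,x₂,x₃)) and divergence-free (∂₁v₁ + ∂₂v₂ + ∂₃v₃ = 0). Then for all (x₂,x₃): (1/λ₁)∫₀^{λ₁} (∇×[(v·∇)v])₁(x₁,x₂,x₃) dx₁ = (1/λ₁)∫₀^{λ₁} [ (∂₂² − ∂₃²)(v₂v₃) + ∂₂∂₃(v₃² − v₂²) ](x₁,x₂,x₃) dx₁, where (∇×w)₁ = ∂₂w₃ − ∂₃w₂ denotes the first component of the curl and (v·∇)v is the vector with components Σⱼ vⱼ∂ⱼvᵢ. -/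

import Mathlib

/-- Partial derivative in the first coordinate of a scalar field on `ℝ³ = ℝ×ℝ×ℝ`. -/
noncomputable def d1 (f : ℝ × ℝ × ℝ → ℝ) (x : ℝ × ℝ × ℝ) : ℝ :=
  deriv (fun t => f (t, x.2.1, x.2.2)) x.1

/-- Partial derivative in the second coordinate of a scalar field on `ℝ³ = ℝ×ℝ×ℝ`. -/
noncomputable def d2 (f : ℝ × ℝ × ℝ → ℝ) (x : ℝ × ℝ × ℝ) : ℝ :=
  deriv (fun t => f (x.1, t, x.2.2)) x.2.1

/-- Partial derivative in the third coordinate, within the slab `x₃ ∈ [−d,0]`. -/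
noncomputable def d3 (d : ℝ) (f : ℝ × ℝ × ℝ → ℝ) (x : ℝ × ℝ × ℝ) : ℝ :=
  derivWithin (fun t => f (x.1, x.2.1, t)) (Set.Icc (-d) 0) x.2.2

namespace Stmt19Aux

open Set

/-- The slab. -/
def S (d : ℝ) : Set (ℝ × ℝ × ℝ) := {x | x.2.2 ∈ Set.Icc (-d) 0}

lemma mem_S {d : ℝ} {x : ℝ × ℝ × ℝ} (hx : x.2.2 ∈ Set.Icc (-d) 0) : x ∈ S d := hx

lemma S_eq (d : ℝ) : S d = (univ : Set ℝ) ×ˢ ((univ : Set ℝ) ×ˢ Icc (-d) 0) := by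
  ext x; simp [S, Set.mem_prod]

lemma uniqueDiffOn_S {d : ℝ} (hd : 0 < d) : UniqueDiffOn ℝ (S d) := by
  rw [S_eq]
  exact uniqueDiffOn_univ.prod (uniqueDiffOn_univ.prod (uniqueDiffOn_Icc (by linarith)))

lemma closure_interior_S {d : ℝ} (hd : 0 < d) : closure (interior (S d)) = S d := by
  rw [S_eq, interior_prod_eq, interior_prod_eq, closure_prod_eq, closure_prod_eq,
    interior_univ, closure_univ, interior_Icc,
    closure_Ioo (by linarith : (-d) ≠ 0)]

variable {d : ℝ} (hd : 0 < d)

lemma d1_eq {f : ℝ × ℝ × ℝ → ℝ} {x : ℝ × ℝ × ℝ} (hx : x ∈ S d)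
    (hf : DifferentiableWithinAt ℝ f (S d) x) :
    d1 f x = fderivWithin ℝ f (S d) x (1, 0, 0) := by
  have hγ : HasDerivAt (fun t : ℝ => ((t, x.2.1, x.2.2) : ℝ × ℝ × ℝ))
      (((1 : ℝ), (0 : ℝ), (0 : ℝ)) : ℝ × ℝ × ℝ) x.1 :=
    (hasDerivAt_id x.1).prodMk (hasDerivAt_const _ _)
  have hmaps : Set.MapsTo (fun t : ℝ => ((t, x.2.1, x.2.2) : ℝ × ℝ × ℝ)) Set.univ (S d) :=
    fun t _ => hx
  have h := hf.hasFDerivWithinAt.comp_hasDerivWithinAt x.1 hγ.hasDerivWithinAt hmaps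
  rw [hasDerivWithinAt_univ] at h
  exact h.deriv

lemma d2_eq {f : ℝ × ℝ × ℝ → ℝ} {x : ℝ × ℝ × ℝ} (hx : x ∈ S d)
    (hf : DifferentiableWithinAt ℝ f (S d) x) :
    d2 f x = fderivWithin ℝ f (S d) x (0, 1, 0) := by
  have hγ : HasDerivAt (fun t : ℝ => ((x.1, t, x.2.2) : ℝ × ℝ × ℝ))
      (((0 : ℝ), (1 : ℝ), (0 : ℝ)) : ℝ × ℝ × ℝ) x.2.1 :=
    (hasDerivAt_const _ _).prodMk ((hasDerivAt_id _).prodMk (hasDerivAt_const _ _))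
  have hmaps : Set.MapsTo (fun t : ℝ => ((x.1, t, x.2.2) : ℝ × ℝ × ℝ)) Set.univ (S d) :=
    fun t _ => hx
  have h := hf.hasFDerivWithinAt.comp_hasDerivWithinAt x.2.1 hγ.hasDerivWithinAt hmaps
  rw [hasDerivWithinAt_univ] at h
  exact h.deriv

include hd in
lemma d3_eq {f : ℝ × ℝ × ℝ → ℝ} {x : ℝ × ℝ × ℝ} (hx : x ∈ S d)
    (hf : DifferentiableWithinAt ℝ f (S d) x) :
    d3 d f x = fderivWithin ℝ f (S d) x (0, 0, 1) := by
  have hγ : HasDerivWithinAt (fun t : ℝ => ((x.1, x.2.1, t) : ℝ × ℝ × ℝ))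
      (((0 : ℝ), (0 : ℝ), (1 : ℝ)) : ℝ × ℝ × ℝ) (Icc (-d) 0) x.2.2 :=
    (((hasDerivAt_const _ _).prodMk ((hasDerivAt_const _ _).prodMk
      (hasDerivAt_id _)))).hasDerivWithinAt
  have hmaps : Set.MapsTo (fun t : ℝ => ((x.1, x.2.1, t) : ℝ × ℝ × ℝ)) (Icc (-d) 0) (S d) :=
    fun t ht => ht
  have h := hf.hasFDerivWithinAt.comp_hasDerivWithinAt x.2.2 hγ hmaps
  exact h.derivWithin (uniqueDiffOn_Icc (by linarith : (-d) < 0) x.2.2 hx)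

lemma d1_congr {f g : ℝ × ℝ × ℝ → ℝ} (h : Set.EqOn f g (S d)) {x : ℝ × ℝ × ℝ}
    (hx : x ∈ S d) : d1 f x = d1 g x := by
  simp only [d1]
  congr 1
  funext t
  exact h (mem_S (show ((t, x.2.1, x.2.2) : ℝ × ℝ × ℝ).2.2 ∈ Icc (-d) 0 from hx))

lemma d2_congr {f g : ℝ × ℝ × ℝ → ℝ} (h : Set.EqOn f g (S d)) {x : ℝ × ℝ × ℝ}
    (hx : x ∈ S d) : d2 f x = d2 g x := by
  simp only [d2]
  congr 1
  funext t
  exact h (mem_S (show ((x.1, t, x.2.2) : ℝ × ℝ × ℝ).2.2 ∈ Icc (-d) 0 from hx))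

lemma d3_congr {f g : ℝ × ℝ × ℝ → ℝ} (h : Set.EqOn f g (S d)) {x : ℝ × ℝ × ℝ}
    (hx : x ∈ S d) : d3 d f x = d3 d g x := by
  simp only [d3]
  exact derivWithin_congr (fun t ht => h (mem_S ht)) (h hx)

variable {lam1 : ℝ}

/-- second derivative within the slab. -/
noncomputable def T (d : ℝ) (f : ℝ × ℝ × ℝ → ℝ) (x : ℝ × ℝ × ℝ) (v w : ℝ × ℝ × ℝ) : ℝ :=
  fderivWithin ℝ (fderivWithin ℝ f (S d)) (S d) x v w

include hd in
lemma diffOn_fderiv {f : ℝ × ℝ × ℝ → ℝ} (hf : ContDiffOn ℝ 2 f (S d)) :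
    DifferentiableOn ℝ (fderivWithin ℝ f (S d)) (S d) :=
  (hf.fderivWithin (uniqueDiffOn_S hd) (m := 1) (by norm_num)).differentiableOn one_ne_zero

include hd in
lemma diffOn_apply {f : ℝ × ℝ × ℝ → ℝ} (hf : ContDiffOn ℝ 2 f (S d)) (e : ℝ × ℝ × ℝ) :
    DifferentiableOn ℝ (fun y => fderivWithin ℝ f (S d) y e) (S d) :=
  (diffOn_fderiv hd hf).clm_apply (differentiableOn_const e)

include hd in
lemma fderivWithin_apply_const {f : ℝ × ℝ × ℝ → ℝ} (hf : ContDiffOn ℝ 2 f (S d))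
    {x : ℝ × ℝ × ℝ} (hx : x ∈ S d) (e v : ℝ × ℝ × ℝ) :
    fderivWithin ℝ (fun y => fderivWithin ℝ f (S d) y e) (S d) x v = T d f x v e := by
  rw [fderivWithin_clm_apply ((uniqueDiffOn_S hd) x hx) ((diffOn_fderiv hd hf) x hx)
    (differentiableWithinAt_const e)]
  simp [T, fderivWithin_const_apply e]

include hd in
lemma d1_apply {f : ℝ × ℝ × ℝ → ℝ} (hf : ContDiffOn ℝ 2 f (S d))
    {x : ℝ × ℝ × ℝ} (hx : x ∈ S d) (e : ℝ × ℝ × ℝ) :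
    d1 (fun y => fderivWithin ℝ f (S d) y e) x = T d f x (1, 0, 0) e := by
  rw [d1_eq hx ((diffOn_apply hd hf e) x hx), fderivWithin_apply_const hd hf hx]

include hd in
lemma d2_apply {f : ℝ × ℝ × ℝ → ℝ} (hf : ContDiffOn ℝ 2 f (S d))
    {x : ℝ × ℝ × ℝ} (hx : x ∈ S d) (e : ℝ × ℝ × ℝ) :
    d2 (fun y => fderivWithin ℝ f (S d) y e) x = T d f x (0, 1, 0) e := by
  rw [d2_eq hx ((diffOn_apply hd hf e) x hx), fderivWithin_apply_const hd hf hx]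

include hd in
lemma d3_apply {f : ℝ × ℝ × ℝ → ℝ} (hf : ContDiffOn ℝ 2 f (S d))
    {x : ℝ × ℝ × ℝ} (hx : x ∈ S d) (e : ℝ × ℝ × ℝ) :
    d3 d (fun y => fderivWithin ℝ f (S d) y e) x = T d f x (0, 0, 1) e := by
  rw [d3_eq hd hx ((diffOn_apply hd hf e) x hx), fderivWithin_apply_const hd hf hx]

include hd in
lemma T_symm {f : ℝ × ℝ × ℝ → ℝ} (hf : ContDiffOn ℝ 2 f (S d))
    {x : ℝ × ℝ × ℝ} (hx : x ∈ S d) (v w : ℝ × ℝ × ℝ) :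
    T d f x v w = T d f x w v := by
  have h := (hf x hx).isSymmSndFDerivWithinAt (by simp) (uniqueDiffOn_S hd)
    (by rw [closure_interior_S hd]; exact hx) hx
  exact h v w

include hd in
lemma T_cont {f : ℝ × ℝ × ℝ → ℝ} (hf : ContDiffOn ℝ 2 f (S d)) (v w : ℝ × ℝ × ℝ)
    {b c : ℝ} (hc : c ∈ Icc (-d) 0) :
    Continuous (fun t : ℝ => T d f (t, b, c) v w) := by
  have h1 : ContinuousOn (fun x => fderivWithin ℝ (fderivWithin ℝ f (S d)) (S d) x) (S d) :=
    ((hf.fderivWithin (uniqueDiffOn_S hd) (m := 1) (by norm_num)).fderivWithin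
      (uniqueDiffOn_S hd) (m := 0) (by norm_num)).continuousOn
  have h2 : ContinuousOn (fun x => T d f x v w) (S d) :=
    (h1.clm_apply continuousOn_const).clm_apply continuousOn_const
  exact h2.comp_continuous (by fun_prop) (fun t => mem_S hc)

include hd in
lemma fderiv_mul_apply {f g : ℝ × ℝ × ℝ → ℝ} {x : ℝ × ℝ × ℝ} (hx : x ∈ S d)
    (hf : DifferentiableWithinAt ℝ f (S d) x) (hg : DifferentiableWithinAt ℝ g (S d) x)
    (v : ℝ × ℝ × ℝ) :
    fderivWithin ℝ (fun y => f y * g y) (S d) x v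
      = f x * fderivWithin ℝ g (S d) x v + g x * fderivWithin ℝ f (S d) x v := by
  rw [fderivWithin_fun_mul ((uniqueDiffOn_S hd) x hx) hf hg]
  simp

include hd in
lemma d1_sub {f g : ℝ × ℝ × ℝ → ℝ} {x : ℝ × ℝ × ℝ} (hx : x ∈ S d)
    (hf : DifferentiableWithinAt ℝ f (S d) x) (hg : DifferentiableWithinAt ℝ g (S d) x) :
    d1 (fun y => f y - g y) x = d1 f x - d1 g x := by
  rw [d1_eq hx (f := fun y => f y - g y) (hf.sub hg), d1_eq hx hf, d1_eq hx hg,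
    fderivWithin_fun_sub ((uniqueDiffOn_S hd) x hx) hf hg]
  simp

include hd in
lemma d2_sub {f g : ℝ × ℝ × ℝ → ℝ} {x : ℝ × ℝ × ℝ} (hx : x ∈ S d)
    (hf : DifferentiableWithinAt ℝ f (S d) x) (hg : DifferentiableWithinAt ℝ g (S d) x) :
    d2 (fun y => f y - g y) x = d2 f x - d2 g x := by
  rw [d2_eq hx (f := fun y => f y - g y) (hf.sub hg), d2_eq hx hf, d2_eq hx hg,
    fderivWithin_fun_sub ((uniqueDiffOn_S hd) x hx) hf hg]
  simp

include hd in
lemma d3_sub {f g : ℝ × ℝ × ℝ → ℝ} {x : ℝ × ℝ × ℝ} (hx : x ∈ S d)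
    (hf : DifferentiableWithinAt ℝ f (S d) x) (hg : DifferentiableWithinAt ℝ g (S d) x) :
    d3 d (fun y => f y - g y) x = d3 d f x - d3 d g x := by
  rw [d3_eq hd hx (f := fun y => f y - g y) (hf.sub hg), d3_eq hd hx hf, d3_eq hd hx hg,
    fderivWithin_fun_sub ((uniqueDiffOn_S hd) x hx) hf hg]
  simp

include hd in
lemma d2_add3 {f g k : ℝ × ℝ × ℝ → ℝ} {x : ℝ × ℝ × ℝ} (hx : x ∈ S d)
    (hf : DifferentiableWithinAt ℝ f (S d) x) (hg : DifferentiableWithinAt ℝ g (S d) x)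
    (hk : DifferentiableWithinAt ℝ k (S d) x) :
    d2 (fun y => f y + g y + k y) x = d2 f x + d2 g x + d2 k x := by
  rw [d2_eq hx (f := fun y => f y + g y + k y) ((hf.add hg).add hk), d2_eq hx hf, d2_eq hx hg, d2_eq hx hk,
    fderivWithin_fun_add ((uniqueDiffOn_S hd) x hx) (f := fun y => f y + g y) (hf.add hg) hk,
    fderivWithin_fun_add ((uniqueDiffOn_S hd) x hx) hf hg]
  simp

include hd in
lemma d3_add3 {f g k : ℝ × ℝ × ℝ → ℝ} {x : ℝ × ℝ × ℝ} (hx : x ∈ S d)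
    (hf : DifferentiableWithinAt ℝ f (S d) x) (hg : DifferentiableWithinAt ℝ g (S d) x)
    (hk : DifferentiableWithinAt ℝ k (S d) x) :
    d3 d (fun y => f y + g y + k y) x = d3 d f x + d3 d g x + d3 d k x := by
  rw [d3_eq hd hx (f := fun y => f y + g y + k y) ((hf.add hg).add hk), d3_eq hd hx hf, d3_eq hd hx hg, d3_eq hd hx hk,
    fderivWithin_fun_add ((uniqueDiffOn_S hd) x hx) (f := fun y => f y + g y) (hf.add hg) hk,
    fderivWithin_fun_add ((uniqueDiffOn_S hd) x hx) hf hg]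
  simp

include hd in
lemma key {v₁ v₂ v₃ : ℝ × ℝ × ℝ → ℝ}
    (hv₁ : ContDiffOn ℝ 2 v₁ (S d)) (hv₂ : ContDiffOn ℝ 2 v₂ (S d))
    (hv₃ : ContDiffOn ℝ 2 v₃ (S d))
    (hdiv : ∀ x ∈ S d, d1 v₁ x + d2 v₂ x + d3 d v₃ x = 0)
    {x : ℝ × ℝ × ℝ} (hx : x ∈ S d) :
    d2 (fun y => v₁ y * d1 v₃ y + v₂ y * d2 v₃ y + v₃ y * d3 d v₃ y) x
      - d3 d (fun y => v₁ y * d1 v₂ y + v₂ y * d2 v₂ y + v₃ y * d3 d v₂ y) x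
    = (d2 (d2 (fun y => v₂ y * v₃ y)) x - d3 d (d3 d (fun y => v₂ y * v₃ y)) x
        + d2 (d3 d (fun y => (v₃ y) ^ 2 - (v₂ y) ^ 2)) x)
      + d1 (fun y => fderivWithin ℝ (fun z => v₁ z * v₃ z) (S d) y (0, 1, 0)
             - fderivWithin ℝ (fun z => v₁ z * v₂ z) (S d) y (0, 0, 1)) x := by
  have hd₁ : DifferentiableOn ℝ v₁ (S d) := hv₁.differentiableOn two_ne_zero
  have hd₂ : DifferentiableOn ℝ v₂ (S d) := hv₂.differentiableOn two_ne_zero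
  have hd₃ : DifferentiableOn ℝ v₃ (S d) := hv₃.differentiableOn two_ne_zero
  have h13 : ContDiffOn ℝ 2 (fun y => v₁ y * v₃ y) (S d) := hv₁.mul hv₃
  have h12 : ContDiffOn ℝ 2 (fun y => v₁ y * v₂ y) (S d) := hv₁.mul hv₂
  have h23 : ContDiffOn ℝ 2 (fun y => v₂ y * v₃ y) (S d) := hv₂.mul hv₃
  have h22 : ContDiffOn ℝ 2 (fun y => v₂ y * v₂ y) (S d) := hv₂.mul hv₂
  have h33 : ContDiffOn ℝ 2 (fun y => v₃ y * v₃ y) (S d) := hv₃.mul hv₃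
  have hdiv' : ∀ y ∈ S d, fderivWithin ℝ v₁ (S d) y (1, 0, 0)
      + fderivWithin ℝ v₂ (S d) y (0, 1, 0) + fderivWithin ℝ v₃ (S d) y (0, 0, 1) = 0 := by
    intro y hy
    have h := hdiv y hy
    rwa [d1_eq hy (hd₁ y hy), d2_eq hy (hd₂ y hy), d3_eq hd hy (hd₃ y hy)] at h
  have hEq3 : Set.EqOn (fun y => v₁ y * d1 v₃ y + v₂ y * d2 v₃ y + v₃ y * d3 d v₃ y)
      (fun y => fderivWithin ℝ (fun z => v₁ z * v₃ z) (S d) y (1, 0, 0)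
        + fderivWithin ℝ (fun z => v₂ z * v₃ z) (S d) y (0, 1, 0)
        + fderivWithin ℝ (fun z => v₃ z * v₃ z) (S d) y (0, 0, 1)) (S d) := by
    intro y hy
    show v₁ y * d1 v₃ y + v₂ y * d2 v₃ y + v₃ y * d3 d v₃ y
      = fderivWithin ℝ (fun z => v₁ z * v₃ z) (S d) y (1, 0, 0)
        + fderivWithin ℝ (fun z => v₂ z * v₃ z) (S d) y (0, 1, 0)
        + fderivWithin ℝ (fun z => v₃ z * v₃ z) (S d) y (0, 0, 1)
    rw [d1_eq hy (hd₃ y hy), d2_eq hy (hd₃ y hy), d3_eq hd hy (hd₃ y hy),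
      fderiv_mul_apply hd hy (hd₁ y hy) (hd₃ y hy),
      fderiv_mul_apply hd hy (hd₂ y hy) (hd₃ y hy),
      fderiv_mul_apply hd hy (hd₃ y hy) (hd₃ y hy)]
    linear_combination (-(v₃ y)) * (hdiv' y hy)
  have hEq2 : Set.EqOn (fun y => v₁ y * d1 v₂ y + v₂ y * d2 v₂ y + v₃ y * d3 d v₂ y)
      (fun y => fderivWithin ℝ (fun z => v₁ z * v₂ z) (S d) y (1, 0, 0)
        + fderivWithin ℝ (fun z => v₂ z * v₂ z) (S d) y (0, 1, 0)
        + fderivWithin ℝ (fun z => v₂ z * v₃ z) (S d) y (0, 0, 1)) (S d) := by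
    intro y hy
    show v₁ y * d1 v₂ y + v₂ y * d2 v₂ y + v₃ y * d3 d v₂ y
      = fderivWithin ℝ (fun z => v₁ z * v₂ z) (S d) y (1, 0, 0)
        + fderivWithin ℝ (fun z => v₂ z * v₂ z) (S d) y (0, 1, 0)
        + fderivWithin ℝ (fun z => v₂ z * v₃ z) (S d) y (0, 0, 1)
    rw [d1_eq hy (hd₂ y hy), d2_eq hy (hd₂ y hy), d3_eq hd hy (hd₂ y hy),
      fderiv_mul_apply hd hy (hd₁ y hy) (hd₂ y hy),
      fderiv_mul_apply hd hy (hd₂ y hy) (hd₂ y hy),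
      fderiv_mul_apply hd hy (hd₂ y hy) (hd₃ y hy)]
    linear_combination (-(v₂ y)) * (hdiv' y hy)
  have hL : d2 (fun y => v₁ y * d1 v₃ y + v₂ y * d2 v₃ y + v₃ y * d3 d v₃ y) x
      - d3 d (fun y => v₁ y * d1 v₂ y + v₂ y * d2 v₂ y + v₃ y * d3 d v₂ y) x
      = (T d (fun z => v₁ z * v₃ z) x (0, 1, 0) (1, 0, 0)
          + T d (fun z => v₂ z * v₃ z) x (0, 1, 0) (0, 1, 0)
          + T d (fun z => v₃ z * v₃ z) x (0, 1, 0) (0, 0, 1))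
        - (T d (fun z => v₁ z * v₂ z) x (0, 0, 1) (1, 0, 0)
            + T d (fun z => v₂ z * v₂ z) x (0, 0, 1) (0, 1, 0)
            + T d (fun z => v₂ z * v₃ z) x (0, 0, 1) (0, 0, 1)) := by
    rw [d2_congr hEq3 hx, d3_congr hEq2 hx,
      d2_add3 hd hx ((diffOn_apply hd h13 (1, 0, 0)) x hx)
        ((diffOn_apply hd h23 (0, 1, 0)) x hx) ((diffOn_apply hd h33 (0, 0, 1)) x hx),
      d3_add3 hd hx ((diffOn_apply hd h12 (1, 0, 0)) x hx)
        ((diffOn_apply hd h22 (0, 1, 0)) x hx) ((diffOn_apply hd h23 (0, 0, 1)) x hx),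
      d2_apply hd h13 hx, d2_apply hd h23 hx, d2_apply hd h33 hx,
      d3_apply hd h12 hx, d3_apply hd h22 hx, d3_apply hd h23 hx]
  have hR1 : d2 (d2 (fun y => v₂ y * v₃ y)) x
      = T d (fun z => v₂ z * v₃ z) x (0, 1, 0) (0, 1, 0) := by
    have hEq : Set.EqOn (d2 (fun y => v₂ y * v₃ y))
        (fun y => fderivWithin ℝ (fun z => v₂ z * v₃ z) (S d) y (0, 1, 0)) (S d) :=
      fun y hy => d2_eq hy (h23.differentiableOn two_ne_zero y hy)
    rw [d2_congr hEq hx, d2_apply hd h23 hx]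
  have hR2 : d3 d (d3 d (fun y => v₂ y * v₃ y)) x
      = T d (fun z => v₂ z * v₃ z) x (0, 0, 1) (0, 0, 1) := by
    have hEq : Set.EqOn (d3 d (fun y => v₂ y * v₃ y))
        (fun y => fderivWithin ℝ (fun z => v₂ z * v₃ z) (S d) y (0, 0, 1)) (S d) :=
      fun y hy => d3_eq hd hy (h23.differentiableOn two_ne_zero y hy)
    rw [d3_congr hEq hx, d3_apply hd h23 hx]
  have hR3 : d2 (d3 d (fun y => (v₃ y) ^ 2 - (v₂ y) ^ 2)) x
      = T d (fun z => v₃ z * v₃ z) x (0, 1, 0) (0, 0, 1)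
        - T d (fun z => v₂ z * v₂ z) x (0, 1, 0) (0, 0, 1) := by
    have hfun : (fun y => (v₃ y) ^ 2 - (v₂ y) ^ 2) = fun y => v₃ y * v₃ y - v₂ y * v₂ y := by
      funext y; ring
    rw [hfun]
    have hEq : Set.EqOn (d3 d (fun y => v₃ y * v₃ y - v₂ y * v₂ y))
        (fun y => fderivWithin ℝ (fun z => v₃ z * v₃ z) (S d) y (0, 0, 1)
          - fderivWithin ℝ (fun z => v₂ z * v₂ z) (S d) y (0, 0, 1)) (S d) := by
      intro y hy
      show d3 d (fun y => v₃ y * v₃ y - v₂ y * v₂ y) y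
        = fderivWithin ℝ (fun z => v₃ z * v₃ z) (S d) y (0, 0, 1)
          - fderivWithin ℝ (fun z => v₂ z * v₂ z) (S d) y (0, 0, 1)
      rw [d3_sub hd hy (h33.differentiableOn two_ne_zero y hy)
          (h22.differentiableOn two_ne_zero y hy),
        d3_eq hd hy (h33.differentiableOn two_ne_zero y hy),
        d3_eq hd hy (h22.differentiableOn two_ne_zero y hy)]
    rw [d2_congr hEq hx,
      d2_sub hd hx ((diffOn_apply hd h33 (0, 0, 1)) x hx) ((diffOn_apply hd h22 (0, 0, 1)) x hx),
      d2_apply hd h33 hx, d2_apply hd h22 hx]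
  have hR4 : d1 (fun y => fderivWithin ℝ (fun z => v₁ z * v₃ z) (S d) y (0, 1, 0)
        - fderivWithin ℝ (fun z => v₁ z * v₂ z) (S d) y (0, 0, 1)) x
      = T d (fun z => v₁ z * v₃ z) x (1, 0, 0) (0, 1, 0)
        - T d (fun z => v₁ z * v₂ z) x (1, 0, 0) (0, 0, 1) := by
    rw [d1_sub hd hx ((diffOn_apply hd h13 (0, 1, 0)) x hx)
        ((diffOn_apply hd h12 (0, 0, 1)) x hx),
      d1_apply hd h13 hx, d1_apply hd h12 hx]
  rw [hL, hR1, hR2, hR3, hR4,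
    T_symm hd h13 hx (0, 1, 0) (1, 0, 0), T_symm hd h12 hx (0, 0, 1) (1, 0, 0),
    T_symm hd h22 hx (0, 0, 1) (0, 1, 0)]
  ring

include hd in
lemma R1 {f : ℝ × ℝ × ℝ → ℝ} (hf : ContDiffOn ℝ 2 f (S d)) {x : ℝ × ℝ × ℝ} (hx : x ∈ S d) :
    d2 (d2 f) x = T d f x (0, 1, 0) (0, 1, 0) := by
  have hEq : Set.EqOn (d2 f) (fun y => fderivWithin ℝ f (S d) y (0, 1, 0)) (S d) :=
    fun y hy => d2_eq hy (hf.differentiableOn two_ne_zero y hy)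
  rw [d2_congr hEq hx, d2_apply hd hf hx]

include hd in
lemma R2 {f : ℝ × ℝ × ℝ → ℝ} (hf : ContDiffOn ℝ 2 f (S d)) {x : ℝ × ℝ × ℝ} (hx : x ∈ S d) :
    d3 d (d3 d f) x = T d f x (0, 0, 1) (0, 0, 1) := by
  have hEq : Set.EqOn (d3 d f) (fun y => fderivWithin ℝ f (S d) y (0, 0, 1)) (S d) :=
    fun y hy => d3_eq hd hy (hf.differentiableOn two_ne_zero y hy)
  rw [d3_congr hEq hx, d3_apply hd hf hx]

include hd in
lemma R3 {f g : ℝ × ℝ × ℝ → ℝ} (hf : ContDiffOn ℝ 2 f (S d)) (hg : ContDiffOn ℝ 2 g (S d))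
    {x : ℝ × ℝ × ℝ} (hx : x ∈ S d) :
    d2 (d3 d (fun y => (f y) ^ 2 - (g y) ^ 2)) x
      = T d (fun z => f z * f z) x (0, 1, 0) (0, 0, 1)
        - T d (fun z => g z * g z) x (0, 1, 0) (0, 0, 1) := by
  have hff : ContDiffOn ℝ 2 (fun y => f y * f y) (S d) := hf.mul hf
  have hgg : ContDiffOn ℝ 2 (fun y => g y * g y) (S d) := hg.mul hg
  have hfun : (fun y => (f y) ^ 2 - (g y) ^ 2) = fun y => f y * f y - g y * g y := by
    funext y; ring
  rw [hfun]
  have hEq : Set.EqOn (d3 d (fun y => f y * f y - g y * g y))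
      (fun y => fderivWithin ℝ (fun z => f z * f z) (S d) y (0, 0, 1)
        - fderivWithin ℝ (fun z => g z * g z) (S d) y (0, 0, 1)) (S d) := by
    intro y hy
    show d3 d (fun y => f y * f y - g y * g y) y
      = fderivWithin ℝ (fun z => f z * f z) (S d) y (0, 0, 1)
        - fderivWithin ℝ (fun z => g z * g z) (S d) y (0, 0, 1)
    rw [d3_sub hd hy (hff.differentiableOn two_ne_zero y hy)
        (hgg.differentiableOn two_ne_zero y hy),
      d3_eq hd hy (hff.differentiableOn two_ne_zero y hy),
      d3_eq hd hy (hgg.differentiableOn two_ne_zero y hy)]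
  rw [d2_congr hEq hx,
    d2_sub hd hx ((diffOn_apply hd hff (0, 0, 1)) x hx) ((diffOn_apply hd hgg (0, 0, 1)) x hx),
    d2_apply hd hff hx, d2_apply hd hgg hx]

include hd in
lemma R4 {f g : ℝ × ℝ × ℝ → ℝ} (hf : ContDiffOn ℝ 2 f (S d)) (hg : ContDiffOn ℝ 2 g (S d))
    {x : ℝ × ℝ × ℝ} (hx : x ∈ S d) :
    d1 (fun y => fderivWithin ℝ f (S d) y (0, 1, 0)
        - fderivWithin ℝ g (S d) y (0, 0, 1)) x
      = T d f x (1, 0, 0) (0, 1, 0) - T d g x (1, 0, 0) (0, 0, 1) := by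
  rw [d1_sub hd hx ((diffOn_apply hd hf (0, 1, 0)) x hx) ((diffOn_apply hd hg (0, 0, 1)) x hx),
    d1_apply hd hf hx, d1_apply hd hg hx]

lemma d2_per {f : ℝ × ℝ × ℝ → ℝ}
    (hper : ∀ x : ℝ × ℝ × ℝ, f (x.1 + lam1, x.2.1, x.2.2) = f x) (a b c : ℝ) :
    d2 f (a + lam1, b, c) = d2 f (a, b, c) := by
  simp only [d2]
  congr 1
  funext t
  exact hper (a, t, c)

lemma d3_per {f : ℝ × ℝ × ℝ → ℝ}
    (hper : ∀ x : ℝ × ℝ × ℝ, f (x.1 + lam1, x.2.1, x.2.2) = f x) (a b c : ℝ) :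
    d3 d f (a + lam1, b, c) = d3 d f (a, b, c) := by
  have h : (fun t => f (a + lam1, b, t)) = fun t => f (a, b, t) :=
    funext fun t => hper (a, b, t)
  simp only [d3]
  rw [h]

include hd in
lemma Hper {f g : ℝ × ℝ × ℝ → ℝ} (hf : ContDiffOn ℝ 2 f (S d)) (hg : ContDiffOn ℝ 2 g (S d))
    (hpf : ∀ x : ℝ × ℝ × ℝ, f (x.1 + lam1, x.2.1, x.2.2) = f x)
    (hpg : ∀ x : ℝ × ℝ × ℝ, g (x.1 + lam1, x.2.1, x.2.2) = g x)
    {b c : ℝ} (hc : c ∈ Icc (-d) 0) :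
    fderivWithin ℝ f (S d) (lam1, b, c) (0, 1, 0)
        - fderivWithin ℝ g (S d) (lam1, b, c) (0, 0, 1)
      = fderivWithin ℝ f (S d) (0, b, c) (0, 1, 0)
        - fderivWithin ℝ g (S d) (0, b, c) (0, 0, 1) := by
  have h1 : ∀ t : ℝ, fderivWithin ℝ f (S d) (t, b, c) (0, 1, 0) = d2 f (t, b, c) :=
    fun t => (d2_eq (mem_S hc) (hf.differentiableOn two_ne_zero _ (mem_S hc))).symm
  have h2 : ∀ t : ℝ, fderivWithin ℝ g (S d) (t, b, c) (0, 0, 1) = d3 d g (t, b, c) :=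
    fun t => (d3_eq hd (mem_S hc) (hg.differentiableOn two_ne_zero _ (mem_S hc))).symm
  rw [h1, h1, h2, h2, show lam1 = 0 + lam1 by ring, d2_per hpf 0 b c, d3_per hpg 0 b c]

end Stmt19Aux

open Stmt19Aux

/-- For a `λ₁`-periodic, divergence-free `C²` vector field
`v = (v₁,v₂,v₃)` on `ℝ²×[−d,0]`, the `x₁`-average of the first component of the
curl of `(v·∇)v` equals the `x₁`-average of
`(∂₂² − ∂₃²)(v₂v₃) + ∂₂∂₃(v₃² − v₂²)`. -/
theorem stmt_19 (d lam1 : ℝ) (hd : 0 < d) (hlam1 : 0 < lam1)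
    (v₁ v₂ v₃ : ℝ × ℝ × ℝ → ℝ)
    (hv₁ : ContDiffOn ℝ 2 v₁ {x : ℝ × ℝ × ℝ | x.2.2 ∈ Set.Icc (-d) 0})
    (hv₂ : ContDiffOn ℝ 2 v₂ {x : ℝ × ℝ × ℝ | x.2.2 ∈ Set.Icc (-d) 0})
    (hv₃ : ContDiffOn ℝ 2 v₃ {x : ℝ × ℝ × ℝ | x.2.2 ∈ Set.Icc (-d) 0})
    (hper₁ : ∀ x : ℝ × ℝ × ℝ, v₁ (x.1 + lam1, x.2.1, x.2.2) = v₁ x)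
    (hper₂ : ∀ x : ℝ × ℝ × ℝ, v₂ (x.1 + lam1, x.2.1, x.2.2) = v₂ x)
    (hper₃ : ∀ x : ℝ × ℝ × ℝ, v₃ (x.1 + lam1, x.2.1, x.2.2) = v₃ x)
    (hdiv : ∀ x : ℝ × ℝ × ℝ, x.2.2 ∈ Set.Icc (-d) 0 →
      d1 v₁ x + d2 v₂ x + d3 d v₃ x = 0) :
    ∀ x₂ : ℝ, ∀ x₃ ∈ Set.Icc (-d) 0,
      (1 / lam1) *
        ∫ x₁ in (0 : ℝ)..lam1,
          (d2 (fun y => v₁ y * d1 v₃ y + v₂ y * d2 v₃ y + v₃ y * d3 d v₃ y) (x₁, x₂, x₃)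
            - d3 d (fun y => v₁ y * d1 v₂ y + v₂ y * d2 v₂ y + v₃ y * d3 d v₂ y)
                (x₁, x₂, x₃))
      = (1 / lam1) *
          ∫ x₁ in (0 : ℝ)..lam1,
            (d2 (d2 (fun y => v₂ y * v₃ y)) (x₁, x₂, x₃)
              - d3 d (d3 d (fun y => v₂ y * v₃ y)) (x₁, x₂, x₃)
              + d2 (d3 d (fun y => (v₃ y) ^ 2 - (v₂ y) ^ 2)) (x₁, x₂, x₃)) := by
  intro x₂ x₃ hx₃
  have hv₁' : ContDiffOn ℝ 2 v₁ (S d) := hv₁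
  have hv₂' : ContDiffOn ℝ 2 v₂ (S d) := hv₂
  have hv₃' : ContDiffOn ℝ 2 v₃ (S d) := hv₃
  have hdiv' : ∀ x ∈ S d, d1 v₁ x + d2 v₂ x + d3 d v₃ x = 0 := hdiv
  have h13 : ContDiffOn ℝ 2 (fun y => v₁ y * v₃ y) (S d) := hv₁'.mul hv₃'
  have h12 : ContDiffOn ℝ 2 (fun y => v₁ y * v₂ y) (S d) := hv₁'.mul hv₂'
  have h23 : ContDiffOn ℝ 2 (fun y => v₂ y * v₃ y) (S d) := hv₂'.mul hv₃'
  have h22 : ContDiffOn ℝ 2 (fun y => v₂ y * v₂ y) (S d) := hv₂'.mul hv₂'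
  have h33 : ContDiffOn ℝ 2 (fun y => v₃ y * v₃ y) (S d) := hv₃'.mul hv₃'
  have hxS : ∀ t : ℝ, ((t, x₂, x₃) : ℝ × ℝ × ℝ) ∈ S d := fun t => hx₃
  congr 1
  -- the x₁-averaged functions
  set G : ℝ → ℝ := fun t =>
    T d (fun z => v₂ z * v₃ z) (t, x₂, x₃) (0, 1, 0) (0, 1, 0)
      - T d (fun z => v₂ z * v₃ z) (t, x₂, x₃) (0, 0, 1) (0, 0, 1)
      + (T d (fun z => v₃ z * v₃ z) (t, x₂, x₃) (0, 1, 0) (0, 0, 1)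
          - T d (fun z => v₂ z * v₂ z) (t, x₂, x₃) (0, 1, 0) (0, 0, 1)) with hGdef
  set Gd : ℝ → ℝ := fun t =>
    T d (fun z => v₁ z * v₃ z) (t, x₂, x₃) (1, 0, 0) (0, 1, 0)
      - T d (fun z => v₁ z * v₂ z) (t, x₂, x₃) (1, 0, 0) (0, 0, 1) with hGddef
  have hGcont : Continuous G := by
    rw [hGdef]
    exact ((T_cont hd h23 (0, 1, 0) (0, 1, 0) hx₃).sub
      (T_cont hd h23 (0, 0, 1) (0, 0, 1) hx₃)).add
      ((T_cont hd h33 (0, 1, 0) (0, 0, 1) hx₃).sub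
        (T_cont hd h22 (0, 1, 0) (0, 0, 1) hx₃))
  have hGdcont : Continuous Gd := by
    rw [hGddef]
    exact (T_cont hd h13 (1, 0, 0) (0, 1, 0) hx₃).sub
      (T_cont hd h12 (1, 0, 0) (0, 0, 1) hx₃)
  have hGint : IntervalIntegrable G MeasureTheory.volume 0 lam1 :=
    hGcont.intervalIntegrable 0 lam1
  have hGdint : IntervalIntegrable Gd MeasureTheory.volume 0 lam1 :=
    hGdcont.intervalIntegrable 0 lam1
  -- the RHS integrand equals G
  have hRHS_eq : ∀ t : ℝ,
      (d2 (d2 (fun y => v₂ y * v₃ y)) (t, x₂, x₃)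
        - d3 d (d3 d (fun y => v₂ y * v₃ y)) (t, x₂, x₃)
        + d2 (d3 d (fun y => (v₃ y) ^ 2 - (v₂ y) ^ 2)) (t, x₂, x₃)) = G t := by
    intro t
    rw [R1 hd h23 (hxS t), R2 hd h23 (hxS t), R3 hd hv₃' hv₂' (hxS t), hGdef]
  -- the LHS integrand equals G + Gd
  have hLHS_eq : ∀ t : ℝ,
      (d2 (fun y => v₁ y * d1 v₃ y + v₂ y * d2 v₃ y + v₃ y * d3 d v₃ y) (t, x₂, x₃)
        - d3 d (fun y => v₁ y * d1 v₂ y + v₂ y * d2 v₂ y + v₃ y * d3 d v₂ y) (t, x₂, x₃))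
      = G t + Gd t := by
    intro t
    rw [key hd hv₁' hv₂' hv₃' hdiv' (hxS t), hRHS_eq t,
      R4 hd h13 h12 (hxS t), hGddef]
  -- derivative facts for the periodic antiderivative
  have hH'diff : DifferentiableOn ℝ
      (fun y => fderivWithin ℝ (fun z => v₁ z * v₃ z) (S d) y (0, 1, 0)
        - fderivWithin ℝ (fun z => v₁ z * v₂ z) (S d) y (0, 0, 1)) (S d) :=
    (diffOn_apply hd h13 (0, 1, 0)).sub (diffOn_apply hd h12 (0, 0, 1))
  have hderiv : ∀ t ∈ Set.uIcc (0 : ℝ) lam1,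
      HasDerivAt (fun s : ℝ =>
        fderivWithin ℝ (fun z => v₁ z * v₃ z) (S d) (s, x₂, x₃) (0, 1, 0)
          - fderivWithin ℝ (fun z => v₁ z * v₂ z) (S d) (s, x₂, x₃) (0, 0, 1)) (Gd t) t := by
    intro t _
    have hγ : HasDerivAt (fun s : ℝ => ((s, x₂, x₃) : ℝ × ℝ × ℝ))
        (((1 : ℝ), (0 : ℝ), (0 : ℝ)) : ℝ × ℝ × ℝ) t :=
      (hasDerivAt_id t).prodMk (hasDerivAt_const _ _)
    have hmaps : Set.MapsTo (fun s : ℝ => ((s, x₂, x₃) : ℝ × ℝ × ℝ)) Set.univ (S d) :=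
      fun s _ => hxS s
    have hcomp := ((hH'diff _ (hxS t)).hasFDerivWithinAt.comp_hasDerivWithinAt t
      hγ.hasDerivWithinAt hmaps)
    rw [hasDerivWithinAt_univ] at hcomp
    have hval : fderivWithin ℝ
        (fun y => fderivWithin ℝ (fun z => v₁ z * v₃ z) (S d) y (0, 1, 0)
          - fderivWithin ℝ (fun z => v₁ z * v₂ z) (S d) y (0, 0, 1)) (S d) (t, x₂, x₃)
        (1, 0, 0) = Gd t := by
      rw [← d1_eq (hxS t) (hH'diff _ (hxS t)), R4 hd h13 h12 (hxS t), hGddef]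
    rw [hval] at hcomp
    exact hcomp
  -- periodicity of the antiderivative
  have hp13 : ∀ x : ℝ × ℝ × ℝ,
      (fun z => v₁ z * v₃ z) (x.1 + lam1, x.2.1, x.2.2) = (fun z => v₁ z * v₃ z) x := by
    intro x
    show v₁ (x.1 + lam1, x.2.1, x.2.2) * v₃ (x.1 + lam1, x.2.1, x.2.2) = v₁ x * v₃ x
    rw [hper₁ x, hper₃ x]
  have hp12 : ∀ x : ℝ × ℝ × ℝ,
      (fun z => v₁ z * v₂ z) (x.1 + lam1, x.2.1, x.2.2) = (fun z => v₁ z * v₂ z) x := by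
    intro x
    show v₁ (x.1 + lam1, x.2.1, x.2.2) * v₂ (x.1 + lam1, x.2.1, x.2.2) = v₁ x * v₂ x
    rw [hper₁ x, hper₂ x]
  have hper : fderivWithin ℝ (fun z => v₁ z * v₃ z) (S d) (lam1, x₂, x₃) (0, 1, 0)
        - fderivWithin ℝ (fun z => v₁ z * v₂ z) (S d) (lam1, x₂, x₃) (0, 0, 1)
      = fderivWithin ℝ (fun z => v₁ z * v₃ z) (S d) (0, x₂, x₃) (0, 1, 0)
        - fderivWithin ℝ (fun z => v₁ z * v₂ z) (S d) (0, x₂, x₃) (0, 0, 1) :=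
    Hper hd h13 h12 hp13 hp12 hx₃
  -- assemble
  rw [intervalIntegral.integral_congr (g := fun t => G t + Gd t) (fun t _ => hLHS_eq t),
    intervalIntegral.integral_congr (g := G) (fun t _ => hRHS_eq t),
    intervalIntegral.integral_add hGint hGdint,
    intervalIntegral.integral_eq_sub_of_hasDerivAt hderiv hGdint]

  rw [hper]
  ring
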